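/- Let φ ∈ K(x₁,…,xₙ) \ K and let ψ₁ and ψ₂ both be generative rational functions for φ (i.e. each ψᵢ is closed and φ ∈ K(ψᵢ)). Then there exist a, b, c, d ∈ K with a·d − b·c ≠ 0 such that ψ₂ = (a·ψ₁ + b)/(c·ψ₁ + d); in particular K(ψ₁) = K(ψ₂). -/

import Mathlib

namespace StmtAux
open Polynomial
section CoreL
variable {L : Type*} [Field L]




/-- The "homogenization" sum `∑ wᵢ pⁱ q^(m-i)`. -/
noncomputable def Wp (p q w : L[X]) (m : ℕ) : L[X] :=
  ∑ i ∈ Finset.range (m + 1), C (w.coeff i) * p ^ i * q ^ (m - i)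

lemma coeff_term (p q : L[X]) (a : L) (i j : ℕ) :
    (C a * p ^ i * q ^ j).coeff (i * p.natDegree + j * q.natDegree) =
      a * p.leadingCoeff ^ i * q.leadingCoeff ^ j := by
  rw [mul_assoc, coeff_C_mul,
    show i * p.natDegree = (p ^ i).natDegree from (natDegree_pow p i).symm,
    show j * q.natDegree = (q ^ j).natDegree from (natDegree_pow q j).symm,
    coeff_mul_degree_add_degree, leadingCoeff_pow, leadingCoeff_pow, mul_assoc]

lemma coeff_term_zero (p q : L[X]) (a : L) (i j N : ℕ)
    (h : i * p.natDegree + j * q.natDegree < N) :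
    (C a * p ^ i * q ^ j).coeff N = 0 := by
  apply coeff_eq_zero_of_natDegree_lt
  calc (C a * p ^ i * q ^ j).natDegree
      ≤ (C a * p ^ i).natDegree + (q ^ j).natDegree := natDegree_mul_le
    _ ≤ ((C a).natDegree + (p ^ i).natDegree) + (q ^ j).natDegree :=
        Nat.add_le_add_right natDegree_mul_le _
    _ = i * p.natDegree + j * q.natDegree := by
        rw [natDegree_C, natDegree_pow, natDegree_pow, zero_add]
    _ < N := h

lemma sum_scaled (w : L[X]) (m : ℕ) (hw : w.natDegree < m + 1) (x y : L) (hy : y ≠ 0) :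
    ∑ i ∈ Finset.range (m + 1), w.coeff i * x ^ i * y ^ (m - i) = y ^ m * eval (x / y) w := by
  rw [eval_eq_sum_range' hw, Finset.mul_sum]
  refine Finset.sum_congr rfl fun i hi => ?_
  have him : i ≤ m := Finset.mem_range_succ_iff.mp hi
  have hym : y ^ m = y ^ i * y ^ (m - i) := by rw [← pow_add]; congr 1; omega
  rw [div_pow, hym]
  field_simp

lemma coeff_W_top (p q w : L[X]) (m : ℕ) (hqp : q.natDegree < p.natDegree) :
    (Wp p q w m).coeff (m * p.natDegree) = w.coeff m * p.leadingCoeff ^ m := by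
  rw [Wp, finset_sum_coeff]
  rw [Finset.sum_eq_single m]
  · have := coeff_term p q (w.coeff m) m 0
    simpa using this
  · intro i hi hne
    apply coeff_term_zero
    have him : i ≤ m := Finset.mem_range_succ_iff.mp hi
    have hilt : i < m := lt_of_le_of_ne him hne
    calc i * p.natDegree + (m - i) * q.natDegree
        < i * p.natDegree + (m - i) * p.natDegree := by
          have : (m - i) * q.natDegree < (m - i) * p.natDegree :=
            (Nat.mul_lt_mul_left (by omega : 0 < m - i)).mpr hqp
          omega
      _ = m * p.natDegree := by rw [← add_mul]; congr 1; omega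
  · intro h; exact absurd (Finset.self_mem_range_succ m) h

lemma coeff_W_bot (p q w : L[X]) (m : ℕ) (hpq : p.natDegree < q.natDegree) :
    (Wp p q w m).coeff (m * q.natDegree) = w.coeff 0 * q.leadingCoeff ^ m := by
  rw [Wp, finset_sum_coeff]
  rw [Finset.sum_eq_single 0]
  · have := coeff_term p q (w.coeff 0) 0 m
    simpa using this
  · intro i hi hne
    apply coeff_term_zero
    have him : i ≤ m := Finset.mem_range_succ_iff.mp hi
    have hipos : 0 < i := Nat.pos_of_ne_zero hne
    calc i * p.natDegree + (m - i) * q.natDegree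
        < i * q.natDegree + (m - i) * q.natDegree := by
          have : i * p.natDegree < i * q.natDegree :=
            (Nat.mul_lt_mul_left hipos).mpr hpq
          omega
      _ = m * q.natDegree := by rw [← add_mul]; congr 1; omega
  · intro h; exact absurd (Finset.mem_range_succ_iff.mpr (Nat.zero_le m)) h

lemma coeff_W_eq (p q w : L[X]) (m : ℕ) (hw : w.natDegree < m + 1) (hq : q ≠ 0)
    (he : p.natDegree = q.natDegree) :
    (Wp p q w m).coeff (m * q.natDegree) =
      q.leadingCoeff ^ m * eval (p.leadingCoeff / q.leadingCoeff) w := by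
  rw [Wp, finset_sum_coeff, ← sum_scaled w m hw _ _ (leadingCoeff_ne_zero.mpr hq)]
  refine Finset.sum_congr rfl fun i hi => ?_
  have him : i ≤ m := Finset.mem_range_succ_iff.mp hi
  have := coeff_term p q (w.coeff i) i (m - i)
  rw [he] at this
  rw [show m * q.natDegree = i * q.natDegree + (m - i) * q.natDegree by
    rw [← add_mul]; congr 1; omega]
  exact this

lemma eval_W (p q w : L[X]) (m : ℕ) (α : L) :
    eval α (Wp p q w m) =
      ∑ i ∈ Finset.range (m + 1), w.coeff i * (eval α p) ^ i * (eval α q) ^ (m - i) := by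
  rw [Wp, eval_finset_sum]
  refine Finset.sum_congr rfl fun i _ => ?_
  simp [eval_mul, eval_pow]


section
variable (p q u v : L[X]) (m : ℕ)
  (hpq : IsCoprime p q) (huv : IsCoprime u v) (hu : u ≠ 0) (hv : v ≠ 0)
  (hum : u.natDegree ≤ m) (hvm : v.natDegree ≤ m)
  (htop : u.natDegree = m ∨ v.natDegree = m)

include hpq huv hu hv hum hvm htop in
lemma no_common_root (α : L) :
    ¬(eval α (Wp p q u m) = 0 ∧ eval α (Wp p q v m) = 0) := by
  rintro ⟨hU, hV⟩
  rw [eval_W] at hU hV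
  set Pα := eval α p with hPa
  set Qα := eval α q with hQa
  by_cases hQ : Qα = 0
  · -- terms with i < m vanish
    have hP : Pα ≠ 0 := by
      have h := hpq.map (evalRingHom α)
      simp only [coe_evalRingHom, ← hPa, ← hQa, hQ] at h
      exact (isCoprime_zero_right.mp h).ne_zero
    have key : ∀ w : L[X],
        (∑ i ∈ Finset.range (m + 1), w.coeff i * Pα ^ i * Qα ^ (m - i)) =
          w.coeff m * Pα ^ m := by
      intro w
      rw [Finset.sum_eq_single m]
      · simp
      · intro i hi hne
        have : m - i ≠ 0 := by
          have := Finset.mem_range_succ_iff.mp hi; omega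
        rw [hQ, zero_pow this, mul_zero]
      · intro h; exact absurd (Finset.self_mem_range_succ m) h
    rw [key u] at hU; rw [key v] at hV
    have hum0 : u.coeff m = 0 := by
      rcases mul_eq_zero.mp hU with h | h
      · exact h
      · exact absurd h (pow_ne_zero _ hP)
    have hvm0 : v.coeff m = 0 := by
      rcases mul_eq_zero.mp hV with h | h
      · exact h
      · exact absurd h (pow_ne_zero _ hP)
    rcases htop with h | h
    · exact leadingCoeff_ne_zero.mpr hu (by rw [leadingCoeff, h]; exact hum0)
    · exact leadingCoeff_ne_zero.mpr hv (by rw [leadingCoeff, h]; exact hvm0)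
  · set β := Pα / Qα with hβ
    have hUm : Qα ^ m * eval β u = 0 := by
      rw [← sum_scaled u m (by omega) Pα Qα hQ]; exact hU
    have hVm : Qα ^ m * eval β v = 0 := by
      rw [← sum_scaled v m (by omega) Pα Qα hQ]; exact hV
    have hQm : Qα ^ m ≠ 0 := pow_ne_zero _ hQ
    have hu0 : eval β u = 0 := by
      rcases mul_eq_zero.mp hUm with h | h
      · exact absurd h hQm
      · exact h
    have hv0 : eval β v = 0 := by
      rcases mul_eq_zero.mp hVm with h | h
      · exact absurd h hQm
      · exact h
    have h := huv.map (evalRingHom β)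
    simp only [coe_evalRingHom, hu0, hv0] at h
    exact not_isUnit_zero (isCoprime_zero_right.mp h)

include huv hu hv hum hvm htop in
lemma le_max_natDegree (hp : p ≠ 0) (hq : q ≠ 0) (hm1 : 1 ≤ m) :
    max p.natDegree q.natDegree ≤ max (Wp p q u m).natDegree (Wp p q v m).natDegree := by
  rcases lt_trichotomy p.natDegree q.natDegree with hlt | heqd | hgt
  · -- n = q.natDegree; use coeff at m * q.natDegree, constant coeff of u or v nonzero
    have h0 : u.coeff 0 ≠ 0 ∨ v.coeff 0 ≠ 0 := by
      by_contra h
      push_neg at h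
      have hXu : X ∣ u := X_dvd_iff.mpr h.1
      have hXv : X ∣ v := X_dvd_iff.mpr h.2
      exact not_isUnit_X (huv.isUnit_of_dvd' hXu hXv)
    have hkey : ∀ w : L[X], w.coeff 0 ≠ 0 →
        m * q.natDegree ≤ (Wp p q w m).natDegree := by
      intro w hw
      apply le_natDegree_of_ne_zero
      rw [coeff_W_bot p q w m hlt]
      exact mul_ne_zero hw (pow_ne_zero _ (leadingCoeff_ne_zero.mpr hq))
    have hn : max p.natDegree q.natDegree = q.natDegree := max_eq_right hlt.le
    rw [hn]
    have hle : q.natDegree ≤ m * q.natDegree := Nat.le_mul_of_pos_left _ hm1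
    rcases h0 with h | h
    · exact le_max_of_le_left (hle.trans (hkey u h))
    · exact le_max_of_le_right (hle.trans (hkey v h))
  · -- equal degrees
    set lam := p.leadingCoeff / q.leadingCoeff with hlam
    have h0 : eval lam u ≠ 0 ∨ eval lam v ≠ 0 := by
      by_contra h
      push_neg at h
      have hc := huv.map (evalRingHom lam)
      simp only [coe_evalRingHom, h.1, h.2] at hc
      exact not_isUnit_zero (isCoprime_zero_right.mp hc)
    have hkey : ∀ w : L[X], w.natDegree ≤ m → eval lam w ≠ 0 →
        m * q.natDegree ≤ (Wp p q w m).natDegree := by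
      intro w hwm hw
      apply le_natDegree_of_ne_zero
      rw [coeff_W_eq p q w m (by omega) hq heqd]
      exact mul_ne_zero (pow_ne_zero _ (leadingCoeff_ne_zero.mpr hq)) hw
    have hn : max p.natDegree q.natDegree = q.natDegree := max_eq_right heqd.le
    rw [hn]
    have hle : q.natDegree ≤ m * q.natDegree := Nat.le_mul_of_pos_left _ hm1
    rcases h0 with h | h
    · exact le_max_of_le_left (hle.trans (hkey u hum h))
    · exact le_max_of_le_right (hle.trans (hkey v hvm h))
  · -- p.natDegree > q.natDegree: top coefficient
    have hkey : ∀ w : L[X], w ≠ 0 → w.natDegree = m →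
        m * p.natDegree ≤ (Wp p q w m).natDegree := by
      intro w hw0 hwm
      apply le_natDegree_of_ne_zero
      rw [coeff_W_top p q w m hgt]
      have : w.coeff m ≠ 0 := by
        rw [← hwm]; exact leadingCoeff_ne_zero.mpr hw0
      exact mul_ne_zero this (pow_ne_zero _ (leadingCoeff_ne_zero.mpr hp))
    have hn : max p.natDegree q.natDegree = p.natDegree := max_eq_left hgt.le
    rw [hn]
    have hle : p.natDegree ≤ m * p.natDegree := Nat.le_mul_of_pos_left _ hm1
    rcases htop with h | h
    · exact le_max_of_le_left (hle.trans (hkey u hu h))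
    · exact le_max_of_le_right (hle.trans (hkey v hv h))

end
lemma algebraMap_Wp (g : RatFunc L) (p q w : L[X]) (m : ℕ)
    (hq : algebraMap L[X] (RatFunc L) q ≠ 0)
    (hg : g = algebraMap L[X] (RatFunc L) p / algebraMap L[X] (RatFunc L) q)
    (hw : w.natDegree < m + 1) :
    algebraMap L[X] (RatFunc L) (Wp p q w m) =
      Polynomial.aeval g w * (algebraMap L[X] (RatFunc L) q) ^ m := by
  rw [Wp, map_sum, Polynomial.aeval_eq_sum_range' hw, Finset.sum_mul]
  refine Finset.sum_congr rfl fun i hi => ?_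
  have him : i ≤ m := Finset.mem_range_succ_iff.mp hi
  have hP : algebraMap L[X] (RatFunc L) p = g * algebraMap L[X] (RatFunc L) q := by
    rw [hg, div_mul_cancel₀ _ hq]
  rw [map_mul, map_mul, map_pow, map_pow, hP, mul_pow, Algebra.smul_def]
  have hC : algebraMap L[X] (RatFunc L) (C (w.coeff i)) = algebraMap L (RatFunc L) (w.coeff i) := by
    rw [IsScalarTower.algebraMap_apply L L[X] (RatFunc L), Polynomial.algebraMap_eq]
  rw [hC]
  have hqpow : (algebraMap L[X] (RatFunc L) q) ^ i * (algebraMap L[X] (RatFunc L) q) ^ (m - i) =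
      (algebraMap L[X] (RatFunc L) q) ^ m := by
    rw [← pow_add]; congr 1; omega
  calc algebraMap L (RatFunc L) (w.coeff i) * (g ^ i * (algebraMap L[X] (RatFunc L) q) ^ i) *
        (algebraMap L[X] (RatFunc L) q) ^ (m - i)
      = algebraMap L (RatFunc L) (w.coeff i) * g ^ i *
          ((algebraMap L[X] (RatFunc L) q) ^ i * (algebraMap L[X] (RatFunc L) q) ^ (m - i)) := by
        ring
    _ = algebraMap L (RatFunc L) (w.coeff i) * g ^ i * (algebraMap L[X] (RatFunc L) q) ^ m := by
        rw [hqpow]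

lemma const_case (g : RatFunc L) (hg : Transcendental L g) (pc qc : L)
    (hgpq : g = algebraMap L[X] (RatFunc L) (C pc) / algebraMap L[X] (RatFunc L) (C qc)) :
    False := by
  apply hg
  rw [hgpq, RatFunc.algebraMap_C, RatFunc.algebraMap_C, ← map_div₀, ← RatFunc.algebraMap_eq_C]
  exact isAlgebraic_algebraMap _

lemma ratfunc_key_coprime [IsAlgClosed L] (g : RatFunc L) (hg : Transcendental L g)
    (u v : L[X]) (hv : Polynomial.aeval g v ≠ 0) (huv : IsCoprime u v)
    (heq : RatFunc.X * Polynomial.aeval g v = Polynomial.aeval g u) :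
    ∃ a b c d : L, a * d - b * c ≠ 0 ∧
      g = algebraMap L[X] (RatFunc L) (C a * X + C b) /
            algebraMap L[X] (RatFunc L) (C c * X + C d) := by
  classical
  have hinj : Function.Injective (algebraMap L[X] (RatFunc L)) :=
    IsFractionRing.injective L[X] (RatFunc L)
  have hXne : (RatFunc.X : RatFunc L) ≠ 0 := by
    rw [← RatFunc.algebraMap_X]
    exact RatFunc.algebraMap_ne_zero X_ne_zero
  have hv0 : v ≠ 0 := by rintro rfl; simp at hv
  have hu' : Polynomial.aeval g u ≠ 0 := by
    rw [← heq]; exact mul_ne_zero hXne hv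
  have hu0 : u ≠ 0 := by rintro rfl; simp at hu'
  set p := RatFunc.num g with hp
  set q := RatFunc.denom g with hq
  have hq0 : q ≠ 0 := RatFunc.denom_ne_zero g
  have hg0 : g ≠ 0 := fun h => hg (h ▸ isAlgebraic_zero)
  have hp0 : p ≠ 0 := RatFunc.num_ne_zero hg0
  have hpq : IsCoprime p q := RatFunc.isCoprime_num_denom g
  have hgpq : g = algebraMap L[X] (RatFunc L) p / algebraMap L[X] (RatFunc L) q :=
    (RatFunc.num_div_denom g).symm
  have hQne : algebraMap L[X] (RatFunc L) q ≠ 0 := RatFunc.algebraMap_ne_zero hq0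
  set m := max u.natDegree v.natDegree with hm
  have hum : u.natDegree ≤ m := le_max_left _ _
  have hvm : v.natDegree ≤ m := le_max_right _ _
  have htop : u.natDegree = m ∨ v.natDegree = m := by
    rcases max_cases u.natDegree v.natDegree with ⟨h, _⟩ | ⟨h, _⟩
    · exact Or.inl h.symm
    · exact Or.inr h.symm
  have hm1 : 1 ≤ m := by
    by_contra hm0
    push_neg at hm0
    interval_cases m
    · obtain ⟨uc, huc⟩ := natDegree_eq_zero.mp (Nat.le_zero.mp hum)
      obtain ⟨vc, hvc⟩ := natDegree_eq_zero.mp (Nat.le_zero.mp hvm)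
      rw [← huc, ← hvc] at heq
      simp only [Polynomial.aeval_C] at heq
      have hvc0 : algebraMap L (RatFunc L) vc ≠ 0 := by
        rw [← hvc] at hv; simpa using hv
      have hX : (RatFunc.X : RatFunc L) = algebraMap L (RatFunc L) (uc / vc) := by
        rw [map_div₀, eq_div_iff hvc0, heq]
      apply Polynomial.X_ne_C (uc / vc)
      apply hinj
      rw [RatFunc.algebraMap_X, RatFunc.algebraMap_C, ← RatFunc.algebraMap_eq_C, hX]
  -- the homogenized polynomials
  have hWu : algebraMap L[X] (RatFunc L) (Wp p q u m) =
      Polynomial.aeval g u * (algebraMap L[X] (RatFunc L) q) ^ m :=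
    algebraMap_Wp g p q u m hQne hgpq (by omega)
  have hWv : algebraMap L[X] (RatFunc L) (Wp p q v m) =
      Polynomial.aeval g v * (algebraMap L[X] (RatFunc L) q) ^ m :=
    algebraMap_Wp g p q v m hQne hgpq (by omega)
  have hWv0 : Wp p q v m ≠ 0 := by
    intro h
    rw [h, map_zero] at hWv
    exact mul_ne_zero hv (pow_ne_zero _ hQne) hWv.symm
  have hUV : Wp p q u m = X * Wp p q v m := by
    apply hinj
    rw [map_mul, RatFunc.algebraMap_X, hWu, hWv, ← mul_assoc, heq]
  have hWcop : IsCoprime (Wp p q u m) (Wp p q v m) := by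
    by_contra hcop
    have hgcd0 : GCDMonoid.gcd (Wp p q u m) (Wp p q v m) ≠ 0 :=
      gcd_ne_zero_of_right hWv0
    have hgcdnu : ¬IsUnit (GCDMonoid.gcd (Wp p q u m) (Wp p q v m)) := by
      intro h
      exact hcop ((gcd_isUnit_iff _ _).mp h)
    have hdeg : (GCDMonoid.gcd (Wp p q u m) (Wp p q v m)).degree ≠ 0 := by
      intro h
      exact hgcdnu (isUnit_iff_degree_eq_zero.mpr h)
    obtain ⟨α, hα⟩ := IsAlgClosed.exists_root _ hdeg
    have hUα : eval α (Wp p q u m) = 0 :=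
      eval_eq_zero_of_dvd_of_eval_eq_zero (gcd_dvd_left _ _) hα
    have hVα : eval α (Wp p q v m) = 0 :=
      eval_eq_zero_of_dvd_of_eval_eq_zero (gcd_dvd_right _ _) hα
    exact no_common_root p q u v m hpq huv hu0 hv0 hum hvm htop α ⟨hUα, hVα⟩
  have hWvUnit : IsUnit (Wp p q v m) := by
    apply hWcop.isUnit_of_dvd'
    · rw [hUV]; exact dvd_mul_left _ _
    · exact dvd_rfl
  have hdegWv : (Wp p q v m).natDegree = 0 := natDegree_eq_zero_of_isUnit hWvUnit
  have hdegWu : (Wp p q u m).natDegree = 1 := by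
    rw [hUV, natDegree_mul X_ne_zero hWv0, natDegree_X, hdegWv]
  have hbound : max p.natDegree q.natDegree ≤ 1 := by
    have := le_max_natDegree p q u v m huv hu0 hv0 hum hvm htop hp0 hq0 hm1
    rw [hdegWu, hdegWv] at this
    simpa using this
  have hp1 : p.natDegree ≤ 1 := le_trans (le_max_left _ _) hbound
  have hq1 : q.natDegree ≤ 1 := le_trans (le_max_right _ _) hbound
  refine ⟨p.coeff 1, p.coeff 0, q.coeff 1, q.coeff 0, ?_, ?_⟩
  · -- determinant nonzero
    intro h0
    have hdeg0 : ∀ w : L[X], w.natDegree ≤ 1 → w.coeff 1 = 0 → ∃ c, w = C c := by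
      intro w hw1 hw
      refine ⟨w.coeff 0, ?_⟩
      have := eq_X_add_C_of_natDegree_le_one hw1
      rw [hw, map_zero, zero_mul, zero_add] at this
      exact this
    have hconst : p.natDegree = 0 → q.natDegree = 0 → False := by
      intro hpd hqd
      obtain ⟨pc, hpc⟩ := natDegree_eq_zero.mp hpd
      obtain ⟨qc, hqc⟩ := natDegree_eq_zero.mp hqd
      exact const_case g hg pc qc (by rw [hpc, hqc]; exact hgpq)
    by_cases ha : p.coeff 1 = 0
    · by_cases hc : q.coeff 1 = 0
      · obtain ⟨pc, hpc⟩ := hdeg0 p hp1 ha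
        obtain ⟨qc, hqc⟩ := hdeg0 q hq1 hc
        exact hconst (by rw [hpc, natDegree_C]) (by rw [hqc, natDegree_C])
      · -- a = 0, c ≠ 0 : then b * c = 0 so b = 0, p = 0
        rw [ha, zero_mul, zero_sub, neg_eq_zero, mul_eq_zero] at h0
        rcases h0 with h | h
        · obtain ⟨pc, hpc⟩ := hdeg0 p hp1 ha
          apply hp0
          rw [hpc]
          rw [hpc, coeff_C] at h
          simpa using h
        · exact hc h
    · -- a ≠ 0 : C a * q = C c * p
      have hkey : C (p.coeff 1) * q = C (q.coeff 1) * p := by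
        have hpeq := eq_X_add_C_of_natDegree_le_one hp1
        have hqeq := eq_X_add_C_of_natDegree_le_one hq1
        calc C (p.coeff 1) * q
            = C (p.coeff 1) * (C (q.coeff 1) * X + C (q.coeff 0)) := by rw [← hqeq]
          _ = C (q.coeff 1) * (C (p.coeff 1) * X + C (p.coeff 0)) +
                C (p.coeff 1 * q.coeff 0 - p.coeff 0 * q.coeff 1) := by
              rw [map_sub, map_mul, map_mul]; ring
          _ = C (q.coeff 1) * p := by rw [h0, map_zero, add_zero, ← hpeq]
      have hdvd : p ∣ C (p.coeff 1) * q := ⟨C (q.coeff 1), by rw [hkey]; ring⟩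
      have hpdvd : p ∣ C (p.coeff 1) := hpq.dvd_of_dvd_mul_right hdvd
      · have hpdeg : p.natDegree = 0 := by
          have := natDegree_le_of_dvd hpdvd (C_ne_zero.mpr ha)
          simpa using this
        have hqdeg : q.natDegree = 0 := by
          have : (C (p.coeff 1) * q).natDegree = (C (q.coeff 1) * p).natDegree := by rw [hkey]
          rw [natDegree_C_mul ha] at this
          by_cases hc : q.coeff 1 = 0
          · rw [hc, map_zero, zero_mul, natDegree_zero] at this; exact this
          · rw [natDegree_C_mul hc, hpdeg] at this; exact this
        exact hconst hpdeg hqdeg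
  · -- the representation
    rw [← eq_X_add_C_of_natDegree_le_one hp1, ← eq_X_add_C_of_natDegree_le_one hq1]
    exact hgpq

lemma ratfunc_key [IsAlgClosed L] (g : RatFunc L) (hg : Transcendental L g)
    (u v : L[X]) (hv : Polynomial.aeval g v ≠ 0)
    (heq : RatFunc.X * Polynomial.aeval g v = Polynomial.aeval g u) :
    ∃ a b c d : L, a * d - b * c ≠ 0 ∧
      g = algebraMap L[X] (RatFunc L) (C a * X + C b) /
            algebraMap L[X] (RatFunc L) (C c * X + C d) := by
  classical
  have hv0 : v ≠ 0 := by rintro rfl; simp at hv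
  set d0 := GCDMonoid.gcd u v with hd0
  have hd0ne : d0 ≠ 0 := gcd_ne_zero_of_right hv0
  have hdvu : d0 ∣ u := gcd_dvd_left u v
  have hdvv : d0 ∣ v := gcd_dvd_right u v
  have hu' : d0 * (u / d0) = u := EuclideanDomain.mul_div_cancel' hd0ne hdvu
  have hv' : d0 * (v / d0) = v := EuclideanDomain.mul_div_cancel' hd0ne hdvv
  have hcop : IsCoprime (u / d0) (v / d0) := isCoprime_div_gcd_div_gcd hv0
  have haed0 : Polynomial.aeval g d0 ≠ 0 := by
    intro h
    exact hd0ne (transcendental_iff.mp hg d0 h)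
  have hv'' : Polynomial.aeval g (v / d0) ≠ 0 := by
    intro h
    apply hv
    rw [← hv', map_mul, h, mul_zero]
  have heq' : RatFunc.X * Polynomial.aeval g (v / d0) = Polynomial.aeval g (u / d0) := by
    apply mul_left_cancel₀ haed0
    calc Polynomial.aeval g d0 * (RatFunc.X * Polynomial.aeval g (v / d0))
        = RatFunc.X * (Polynomial.aeval g d0 * Polynomial.aeval g (v / d0)) := by ring
      _ = RatFunc.X * Polynomial.aeval g v := by rw [← map_mul, hv']
      _ = Polynomial.aeval g u := heq
      _ = Polynomial.aeval g d0 * Polynomial.aeval g (u / d0) := by rw [← map_mul, hu']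
  exact ratfunc_key_coprime g hg (u / d0) (v / d0) hv'' hcop heq'
end CoreL
section FieldLayer
variable {K F : Type*} [Field K] [Field F] [Algebra K F]

lemma mem_range_of_isAlgebraic [IsAlgClosed K] {x : F} (hx : IsAlgebraic K x) :
    x ∈ Set.range (algebraMap K F) := by
  have hint := hx.isIntegral
  have hirr := minpoly.irreducible hint
  have hdeg : (minpoly K x).degree = 1 := IsAlgClosed.degree_eq_one_of_irreducible K hirr
  have hnd : (minpoly K x).natDegree = 1 := natDegree_eq_of_degree_eq_some hdeg
  have heq := eq_X_add_C_of_natDegree_le_one hnd.le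
  have hlc : (minpoly K x).coeff 1 = 1 := by
    have := (minpoly.monic hint).leadingCoeff
    rwa [leadingCoeff, hnd] at this
  rw [hlc, map_one, one_mul] at heq
  have haev := minpoly.aeval K x
  rw [heq] at haev
  simp only [map_add, Polynomial.aeval_X, Polynomial.aeval_C] at haev
  refine ⟨-(minpoly K x).coeff 0, ?_⟩
  rw [map_neg]
  exact (eq_neg_of_add_eq_zero_left haev).symm

lemma isAlgebraic_of_mem_adjoin (M : IntermediateField K F) (φ ψ : F) (hφM : φ ∈ M)
    (hφ : φ ∉ Set.range (algebraMap K F)) (hmem : φ ∈ IntermediateField.adjoin K {ψ}) :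
    IsAlgebraic M ψ := by
  obtain ⟨p, q, hpq⟩ := (IntermediateField.mem_adjoin_simple_iff K φ).mp hmem
  have hq : Polynomial.aeval ψ q ≠ 0 := by
    intro h
    rw [h, div_zero] at hpq
    exact hφ ⟨0, by rw [map_zero, hpq]⟩
  have hq0 : q ≠ 0 := by rintro rfl; simp at hq
  have hφq : φ * Polynomial.aeval ψ q = Polynomial.aeval ψ p := by
    rw [hpq, div_mul_cancel₀ _ hq]
  set φ' : M := ⟨φ, hφM⟩ with hφ'
  set R : Polynomial M := p.map (algebraMap K M) - Polynomial.C φ' * q.map (algebraMap K M)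
    with hR
  have hR0 : R ≠ 0 := by
    intro h
    rw [hR, sub_eq_zero] at h
    obtain ⟨i, hi⟩ : ∃ i, q.coeff i ≠ 0 := by
      by_contra hall
      push_neg at hall
      exact hq0 (Polynomial.ext fun i => by rw [hall i, coeff_zero])
    have hco := congrArg (fun r => Polynomial.coeff r i) h
    simp only [coeff_map, coeff_C_mul] at hco
    have hφ'' : φ' = algebraMap K M (p.coeff i / q.coeff i) := by
      rw [map_div₀, eq_div_iff]
      · linear_combination -hco
      · intro h'
        apply hi
        have : Function.Injective (algebraMap K M) := (algebraMap K M).injective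
        exact this (by rw [h', map_zero])
    apply hφ
    refine ⟨p.coeff i / q.coeff i, ?_⟩
    have h1 : (φ' : F) = φ := rfl
    rw [← h1, hφ'']
    exact (IsScalarTower.algebraMap_apply K M F _).symm
  refine ⟨R, hR0, ?_⟩
  rw [hR, map_sub, map_mul]
  rw [Polynomial.aeval_map_algebraMap, Polynomial.aeval_map_algebraMap, Polynomial.aeval_C]
  have : (algebraMap M F) φ' = φ := rfl
  rw [this, hφq, sub_self]
end FieldLayer
end StmtAux

/-- A rational function `φ` in a field extension `F` of `K` is *closed* if the subfield
`K(φ)` is algebraically closed in `F`. -/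
def IsClosedRatFunc (K : Type*) {F : Type*} [Field K] [Field F] [Algebra K F] (φ : F) : Prop :=
  ∀ x : F, IsAlgebraic (IntermediateField.adjoin K {φ}) x → x ∈ IntermediateField.adjoin K {φ}

open scoped nonZeroDivisors in
theorem StmtAux.stmt_general {K F : Type*} [Field K] [Field F] [Algebra K F] [IsAlgClosed K]
    (φ ψ₁ ψ₂ : F)
    (hφ : φ ∉ Set.range (algebraMap K F))
    (hψ₁ : IsClosedRatFunc K ψ₁) (hφψ₁ : φ ∈ IntermediateField.adjoin K {ψ₁})
    (hψ₂ : IsClosedRatFunc K ψ₂) (hφψ₂ : φ ∈ IntermediateField.adjoin K {ψ₂}) :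
    ∃ a b c d : K, a * d - b * c ≠ 0 ∧
      ψ₂ = (algebraMap K F a * ψ₁ + algebraMap K F b) /
           (algebraMap K F c * ψ₁ + algebraMap K F d) ∧
      IntermediateField.adjoin K {ψ₁} = IntermediateField.adjoin K {ψ₂} := by
  have htrans : ∀ ψ : F, φ ∈ IntermediateField.adjoin K {ψ} → Transcendental K ψ := by
    intro ψ hmem halg
    obtain ⟨c, hc⟩ := StmtAux.mem_range_of_isAlgebraic halg
    apply hφ
    have hψbot : ψ ∈ (⊥ : IntermediateField K F) := by
      rw [IntermediateField.mem_bot]; exact ⟨c, hc⟩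
    have hle : IntermediateField.adjoin K {ψ} ≤ ⊥ :=
      IntermediateField.adjoin_le_iff.mpr (by simpa using hψbot)
    exact IntermediateField.mem_bot.mp (hle hmem)
  have hT1 : Transcendental K ψ₁ := htrans ψ₁ hφψ₁
  have hT2 : Transcendental K ψ₂ := htrans ψ₂ hφψ₂
  have h12 : ψ₁ ∈ IntermediateField.adjoin K {ψ₂} :=
    hψ₂ ψ₁ (StmtAux.isAlgebraic_of_mem_adjoin _ φ ψ₁ hφψ₂ hφ hφψ₁)
  have h21 : ψ₂ ∈ IntermediateField.adjoin K {ψ₁} :=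
    hψ₁ ψ₂ (StmtAux.isAlgebraic_of_mem_adjoin _ φ ψ₂ hφψ₁ hφ hφψ₂)
  have hadj : IntermediateField.adjoin K {ψ₁} = IntermediateField.adjoin K {ψ₂} := by
    apply le_antisymm
    · exact IntermediateField.adjoin_le_iff.mpr (by simpa using h12)
    · exact IntermediateField.adjoin_le_iff.mpr (by simpa using h21)
  -- build the evaluation map `f : RatFunc K →ₐ[K] F` at `ψ₁`
  have hinj : Function.Injective (Polynomial.aeval ψ₁ : Polynomial K →ₐ[K] F) :=
    transcendental_iff_injective.mp hT1
  have hle : (Polynomial K)⁰ ≤ F⁰.comap (Polynomial.aeval ψ₁ : Polynomial K →ₐ[K] F) :=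
    nonZeroDivisors_le_comap_nonZeroDivisors_of_injective _ hinj
  set f : RatFunc K →ₐ[K] F := RatFunc.liftAlgHom (Polynomial.aeval ψ₁) hle with hf
  have hfinj : Function.Injective f :=
    RatFunc.liftAlgHom_injective (Polynomial.aeval ψ₁) hinj hle
  have hfpoly : ∀ pp : Polynomial K,
      f (algebraMap (Polynomial K) (RatFunc K) pp) = Polynomial.aeval ψ₁ pp := by
    intro pp
    have h := RatFunc.liftAlgHom_apply_div (Polynomial.aeval ψ₁) hle pp 1
    simpa using h
  have hfX : f RatFunc.X = ψ₁ := by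
    rw [← RatFunc.algebraMap_X, hfpoly]
    simp
  obtain ⟨p₂, q₂, hpq₂⟩ := (IntermediateField.mem_adjoin_simple_iff K ψ₂).mp h21
  set g : RatFunc K :=
    algebraMap (Polynomial K) (RatFunc K) p₂ / algebraMap (Polynomial K) (RatFunc K) q₂ with hg
  have hfg : f g = ψ₂ := by
    rw [hg, map_div₀, hfpoly, hfpoly, ← hpq₂]
  have hTg : Transcendental K g := by
    rw [transcendental_iff] at hT2 ⊢
    intro w hw
    apply hT2 w
    have h := Polynomial.aeval_algHom_apply f g w
    rw [hw, map_zero, hfg] at h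
    exact h
  obtain ⟨u, v, huv⟩ := (IntermediateField.mem_adjoin_simple_iff K ψ₁).mp h12
  have hψ₁ne : ψ₁ ≠ 0 := fun h => hT1 (h ▸ isAlgebraic_zero)
  have hv : Polynomial.aeval ψ₂ v ≠ 0 := by
    intro h
    rw [h, div_zero] at huv
    exact hψ₁ne huv
  have hvg : Polynomial.aeval g v ≠ 0 := by
    intro h
    apply hv
    have h2 := Polynomial.aeval_algHom_apply f g v
    rw [h, map_zero, hfg] at h2
    exact h2
  have heq : RatFunc.X * Polynomial.aeval g v = Polynomial.aeval g u := by
    apply hfinj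
    rw [map_mul, hfX, ← Polynomial.aeval_algHom_apply, ← Polynomial.aeval_algHom_apply, hfg,
      huv, div_mul_cancel₀ _ hv]
  obtain ⟨a, b, c, d, hdet, hgeq⟩ := StmtAux.ratfunc_key g hTg u v hvg heq
  refine ⟨a, b, c, d, hdet, ?_, hadj⟩
  rw [← hfg, hgeq, map_div₀, hfpoly, hfpoly]
  simp

theorem stmt_4 {K : Type*} [Field K] [IsAlgClosed K] [CharZero K] (n : ℕ)
    (φ ψ₁ ψ₂ : FractionRing (MvPolynomial (Fin n) K))
    (hφ : φ ∉ Set.range (algebraMap K (FractionRing (MvPolynomial (Fin n) K))))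
    (hψ₁ : IsClosedRatFunc K ψ₁) (hφψ₁ : φ ∈ IntermediateField.adjoin K {ψ₁})
    (hψ₂ : IsClosedRatFunc K ψ₂) (hφψ₂ : φ ∈ IntermediateField.adjoin K {ψ₂}) :
    ∃ a b c d : K, a * d - b * c ≠ 0 ∧
      ψ₂ = (algebraMap K (FractionRing (MvPolynomial (Fin n) K)) a * ψ₁ +
              algebraMap K (FractionRing (MvPolynomial (Fin n) K)) b) /
           (algebraMap K (FractionRing (MvPolynomial (Fin n) K)) c * ψ₁ +
              algebraMap K (FractionRing (MvPolynomial (Fin n) K)) d) ∧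
      IntermediateField.adjoin K {ψ₁} = IntermediateField.adjoin K {ψ₂} :=
  StmtAux.stmt_general φ ψ₁ ψ₂ hφ hψ₁ hφψ₁ hψ₂ hφψ₂
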